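/- Every n×n real antisymmetric matrix A decomposes uniquely as A = A_t + A_c where A_t is antisymmetric of the form (A_t)_{ij} = φ_i − φ_j for some φ ∈ ℝⁿ, and A_c is antisymmetric with all row sums equal to zero. -/

import Mathlib

open Matrix Finset

theorem antisymmetric_transitive_cyclic_decomposition {n : ℕ}
    (A : Matrix (Fin n) (Fin n) ℝ) (hA : Aᵀ = -A) :
    ∃! p : Matrix (Fin n) (Fin n) ℝ × Matrix (Fin n) (Fin n) ℝ,
      (∃ φ : Fin n → ℝ, ∀ i j, p.1 i j = φ i - φ j) ∧
      p.1ᵀ = -p.1 ∧ p.2ᵀ = -p.2 ∧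
      (∀ i, ∑ j : Fin n, p.2 i j = 0) ∧
      A = p.1 + p.2 := by
  have hAij : ∀ i j, A j i = -A i j := by
    intro i j
    have := congrFun (congrFun hA i) j
    simpa [Matrix.transpose_apply] using this
  set r : Fin n → ℝ := fun i => ∑ j, A i j with hr
  have hn : ∀ (_ : Fin n), (n : ℝ) ≠ 0 := fun i => by
    have : 0 < n := i.pos
    positivity
  have hsum : ∑ i, r i = 0 := by
    have h1 : ∑ i, ∑ j, A i j = ∑ j, ∑ i, A i j := Finset.sum_comm
    have h2 : ∑ j : Fin n, ∑ i : Fin n, A i j = -∑ i, ∑ j, A i j := by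
      rw [← Finset.sum_neg_distrib]
      refine Finset.sum_congr rfl fun j _ => ?_
      rw [← Finset.sum_neg_distrib]
      exact Finset.sum_congr rfl fun i _ => hAij j i
    have : ∑ i, ∑ j, A i j = 0 := by linarith [h1.trans h2]
    simpa [hr] using this
  set φ : Fin n → ℝ := fun i => r i / n with hφ
  have hφsum : ∑ j, φ j = 0 := by
    rw [hφ, ← Finset.sum_div, hsum, zero_div]
  have hrowT : ∀ i, ∑ j : Fin n, (φ i - φ j) = r i := by
    intro i
    rw [Finset.sum_sub_distrib, hφsum, Finset.sum_const, Finset.card_univ,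
      Fintype.card_fin, sub_zero, nsmul_eq_mul]
    field_simp [hφ, hn i]
    simp only [hφ]
    field_simp [hn i]
  refine ⟨⟨Matrix.of fun i j => φ i - φ j, A - Matrix.of fun i j => φ i - φ j⟩,
    ⟨⟨φ, fun i j => rfl⟩, ?_, ?_, ?_, ?_⟩, ?_⟩
  · ext i j; simp [Matrix.transpose_apply]
  · ext i j
    simp only [Matrix.transpose_apply, Matrix.sub_apply, Matrix.neg_apply, Matrix.of_apply]
    rw [hAij i j]; ring
  · intro i
    simp only [Matrix.sub_apply, Matrix.of_apply]
    rw [Finset.sum_sub_distrib, hrowT i]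
    simp [hr]
  · simp
  · rintro ⟨T, C⟩ ⟨⟨ψ, hψ⟩, hT, hC, hCrow, hAeq⟩
    simp only at hψ hT hC hCrow hAeq
    have hrowA : ∀ i, ∑ j, T i j = r i := by
      intro i
      have := congrArg (fun M => ∑ j, M i j) hAeq
      simp only [Matrix.add_apply, Finset.sum_add_distrib, hCrow i, add_zero] at this
      exact this.symm
    have hψsum : ∀ i, (n : ℝ) * ψ i - ∑ j, ψ j = r i := by
      intro i
      have := hrowA i
      simp only [hψ] at this
      rw [Finset.sum_sub_distrib, Finset.sum_const, Finset.card_univ, Fintype.card_fin,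
        nsmul_eq_mul] at this
      linarith
    have hTval : ∀ i j, T i j = φ i - φ j := by
      intro i j
      have h1 := hψsum i
      have h2 := hψsum j
      have : T i j = (r i - r j) / n := by
        rw [hψ i j, eq_div_iff (hn i)]
        linear_combination h1 - h2
      rw [this, hφ]
      ring
    have hTeq : T = Matrix.of fun i j => φ i - φ j := by
      ext i j; exact hTval i j
    have hCeq : C = A - Matrix.of fun i j => φ i - φ j := by
      rw [hAeq, hTeq]; abel
    exact Prod.ext hTeq hCeq
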